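/- Suppose G ∈ ℝ^{p×m}, and T ∈ ℝ^{m×m} is diagonal positive semidefinite with GᵀG ⪯ T. Let φ be slope-restricted in [α, β] entrywise (α ≤ β, possibly α < 0). Then h(x) = Hx + GΦ(Wx) is Lipschitz in ℓ₂ norm with constant ‖H + ((α+β)/2)GW‖₂ + ((β−α)/2)·‖Wᵀ T W‖₂^{1/2}. -/

import Mathlib

open Matrix
/-- Spectral norm (ℓ₂ operator norm) of a matrix. -/
noncomputable def specNorm {p n : ℕ} (M : Matrix (Fin p) (Fin n) ℝ) : ℝ :=
  ‖LinearMap.toContinuousLinearMap (Matrix.toEuclideanLin M)‖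

/-- View a plain vector as an element of Euclidean space. -/
def eu {n : ℕ} (v : Fin n → ℝ) : EuclideanSpace ℝ (Fin n) := WithLp.toLp 2 v

lemma eu_mulVec_le {p n : ℕ} (M : Matrix (Fin p) (Fin n) ℝ) (v : Fin n → ℝ) :
    ‖eu (M.mulVec v)‖ ≤ specNorm M * ‖eu v‖ :=
  (LinearMap.toContinuousLinearMap (Matrix.toEuclideanLin M)).le_opNorm (eu v)

lemma eu_norm_sq {n : ℕ} (v : Fin n → ℝ) : ‖eu v‖ ^ 2 = v ⬝ᵥ v := by
  rw [← real_inner_self_eq_norm_sq]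
  simp [-inner_self_eq_norm_sq_to_K, eu, PiLp.inner_apply, dotProduct, RCLike.inner_apply, mul_comm]

lemma inner_eq_dot {n : ℕ} (v w : Fin n → ℝ) : (inner ℝ (eu v) (eu w) : ℝ) = v ⬝ᵥ w := by
  simp [eu, PiLp.inner_apply, dotProduct, RCLike.inner_apply, mul_comm]

lemma quad_le {n : ℕ} (M : Matrix (Fin n) (Fin n) ℝ) (v : Fin n → ℝ) :
    v ⬝ᵥ M.mulVec v ≤ specNorm M * ‖eu v‖ ^ 2 := by
  have h1 : v ⬝ᵥ M.mulVec v = (inner ℝ (eu v) (eu (M.mulVec v)) : ℝ) := (inner_eq_dot _ _).symm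
  calc v ⬝ᵥ M.mulVec v ≤ ‖eu v‖ * ‖eu (M.mulVec v)‖ := h1 ▸ real_inner_le_norm _ _
    _ ≤ ‖eu v‖ * (specNorm M * ‖eu v‖) := by
        exact mul_le_mul_of_nonneg_left (eu_mulVec_le M v) (norm_nonneg _)
    _ = specNorm M * ‖eu v‖ ^ 2 := by ring

lemma diag_quad {m : ℕ} (T : Matrix (Fin m) (Fin m) ℝ) (hTdiag : T.IsDiag) (v : Fin m → ℝ) :
    v ⬝ᵥ T.mulVec v = ∑ i, T i i * v i ^ 2 := by
  unfold dotProduct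
  refine Finset.sum_congr rfl fun i _ => ?_
  have hmv : T.mulVec v i = T i i * v i := by
    unfold Matrix.mulVec dotProduct
    rw [Finset.sum_eq_single i (fun j _ hj => by simp only []; rw [show T i j = 0 from hTdiag (Ne.symm hj)]; simp) (by simp)]
  rw [hmv]; ring

lemma diag_entry_nonneg {m : ℕ} (T : Matrix (Fin m) (Fin m) ℝ) (hTpsd : T.PosSemidef) (i : Fin m) :
    0 ≤ T i i := by
  have := hTpsd.dotProduct_mulVec_nonneg (Pi.single i 1)
  simpa [dotProduct, Matrix.mulVec, Pi.single_apply] using this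

/-- Refined loop-transformed Lipschitz bound: if `GᵀG ⪯ T` for a diagonal PSD `T`,
then `h(x) = Hx + GΦ(Wx)` is Lipschitz with constant
`‖H + ((α+β)/2)GW‖ + ((β−α)/2)·‖WᵀTW‖^{1/2}` in the ℓ₂ norm. -/
theorem refined_loop_transform_bound {n m p : ℕ} (φ : ℝ → ℝ) (α β : ℝ) (hαβ : α ≤ β)
    (hslope : ∀ a b : ℝ, a ≠ b → α ≤ (φ a - φ b) / (a - b) ∧ (φ a - φ b) / (a - b) ≤ β)
    (H : Matrix (Fin p) (Fin n) ℝ) (G : Matrix (Fin p) (Fin m) ℝ)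
    (W : Matrix (Fin m) (Fin n) ℝ) (T : Matrix (Fin m) (Fin m) ℝ)
    (hTdiag : T.IsDiag) (hTpsd : T.PosSemidef)
    (hGT : (T - Gᵀ * G).PosSemidef) :
    ∀ x x' : EuclideanSpace ℝ (Fin n),
      ‖eu (H.mulVec x + G.mulVec (fun i => φ (W.mulVec x i))) -
        eu (H.mulVec x' + G.mulVec (fun i => φ (W.mulVec x' i)))‖ ≤
      (specNorm (H + ((α + β) / 2) • (G * W)) +
        (β - α) / 2 * Real.sqrt (specNorm (Wᵀ * T * W))) * ‖x - x'‖ := by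
  intro x x'
  set c : ℝ := (α + β) / 2 with hc
  set L : ℝ := (β - α) / 2 with hLdef
  have hL : 0 ≤ L := by rw [hLdef]; linarith
  set ψ : ℝ → ℝ := fun t => φ t - c * t with hψ
  -- ψ is L-Lipschitz
  have hψlip : ∀ a b : ℝ, |ψ a - ψ b| ≤ L * |a - b| := by
    intro a b
    by_cases hab : a = b
    · simp [hab]
    · have hs := hslope a b hab
      have hne : a - b ≠ 0 := sub_ne_zero.mpr hab
      have h1 : ψ a - ψ b = ((φ a - φ b) / (a - b) - c) * (a - b) := by
        rw [hψ]; field_simp; ring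
      have h2 : |(φ a - φ b) / (a - b) - c| ≤ L := by
        rw [abs_le, hc, hLdef]
        constructor <;> [linarith [hs.1]; linarith [hs.2]]
      rw [h1, abs_mul]
      exact mul_le_mul_of_nonneg_right h2 (abs_nonneg _)
  set z : Fin n → ℝ := fun i => x i - x' i with hz
  set d : Fin m → ℝ := fun i => ψ (W.mulVec x i) - ψ (W.mulVec x' i) with hd
  have hWz : W.mulVec z = fun i => W.mulVec x i - W.mulVec x' i := by
    have : z = (fun i => x i) - (fun i => x' i) := rfl
    rw [this, Matrix.mulVec_sub]; rfl
  -- decomposition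
  have hGd : G.mulVec d = G.mulVec (fun i => φ (W.mulVec x i)) -
      G.mulVec (fun i => φ (W.mulVec x' i)) - c • G.mulVec (W.mulVec z) := by
    have hdeq : d = ((fun i => φ (W.mulVec x i)) - (fun i => φ (W.mulVec x' i))) -
        c • (W.mulVec z) := by
      funext i
      simp only [hd, hψ, hWz, Pi.sub_apply, Pi.smul_apply, smul_eq_mul]
      ring
    rw [hdeq, Matrix.mulVec_sub, Matrix.mulVec_sub, Matrix.mulVec_smul]
  have hdec : (H.mulVec x + G.mulVec (fun i => φ (W.mulVec x i))) -
      (H.mulVec x' + G.mulVec (fun i => φ (W.mulVec x' i))) =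
      (H + c • (G * W)).mulVec z + G.mulVec d := by
    rw [hGd, Matrix.add_mulVec, Matrix.smul_mulVec, ← Matrix.mulVec_mulVec]
    have hHz : H.mulVec z = H.mulVec x - H.mulVec x' := by
      have : z = (fun i => x i) - (fun i => x' i) := rfl
      rw [this, Matrix.mulVec_sub]
    rw [hHz]; abel
  have heq : eu (H.mulVec x + G.mulVec (fun i => φ (W.mulVec x i))) -
      eu (H.mulVec x' + G.mulVec (fun i => φ (W.mulVec x' i))) =
      eu ((H + c • (G * W)).mulVec z) + eu (G.mulVec d) := by
    show eu ((H.mulVec x + G.mulVec (fun i => φ (W.mulVec x i))) -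
      (H.mulVec x' + G.mulVec (fun i => φ (W.mulVec x' i)))) =
      eu ((H + c • (G * W)).mulVec z + G.mulVec d)
    rw [hdec]
  have hznorm : ‖x - x'‖ = ‖eu z‖ := rfl
  -- bound on ‖G d‖
  set S : ℝ := specNorm (Wᵀ * T * W) with hS
  have hS0 : 0 ≤ S := norm_nonneg _
  set w : Fin m → ℝ := W.mulVec z with hw
  have hsq : ‖eu (G.mulVec d)‖ ^ 2 ≤ L ^ 2 * (S * ‖eu z‖ ^ 2) := by
    have e1 : d ⬝ᵥ (Gᵀ * G).mulVec d = (G.mulVec d) ⬝ᵥ (G.mulVec d) := by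
      rw [← Matrix.mulVec_mulVec, Matrix.dotProduct_mulVec, Matrix.vecMul_transpose]
    have e2 : d ⬝ᵥ (Gᵀ * G).mulVec d ≤ d ⬝ᵥ T.mulVec d := by
      have h := hGT.dotProduct_mulVec_nonneg d
      simp only [star_trivial, Matrix.sub_mulVec, dotProduct_sub] at h
      linarith
    have e3 : ∀ i, d i ^ 2 ≤ L ^ 2 * w i ^ 2 := by
      intro i
      have h := hψlip (W.mulVec x i) (W.mulVec x' i)
      have hwi : w i = W.mulVec x i - W.mulVec x' i := congrFun hWz i
      have habs : |d i| ≤ L * |w i| := by rw [hwi]; exact h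
      calc d i ^ 2 = |d i| ^ 2 := (sq_abs _).symm
        _ ≤ (L * |w i|) ^ 2 := pow_le_pow_left₀ (abs_nonneg _) habs 2
        _ = L ^ 2 * w i ^ 2 := by rw [mul_pow, sq_abs]
    have e4 : d ⬝ᵥ T.mulVec d ≤ L ^ 2 * (w ⬝ᵥ T.mulVec w) := by
      rw [diag_quad T hTdiag d, diag_quad T hTdiag w, Finset.mul_sum]
      refine Finset.sum_le_sum fun i _ => ?_
      have := mul_le_mul_of_nonneg_left (e3 i) (diag_entry_nonneg T hTpsd i)
      calc T i i * d i ^ 2 ≤ T i i * (L ^ 2 * w i ^ 2) := this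
        _ = L ^ 2 * (T i i * w i ^ 2) := by ring
    have e5 : w ⬝ᵥ T.mulVec w = z ⬝ᵥ (Wᵀ * T * W).mulVec z := by
      rw [hw, ← Matrix.mulVec_mulVec, ← Matrix.mulVec_mulVec,
        Matrix.dotProduct_mulVec z, Matrix.vecMul_transpose]
    have e6 : z ⬝ᵥ (Wᵀ * T * W).mulVec z ≤ S * ‖eu z‖ ^ 2 := quad_le _ _
    calc ‖eu (G.mulVec d)‖ ^ 2 = (G.mulVec d) ⬝ᵥ (G.mulVec d) := eu_norm_sq _
      _ = d ⬝ᵥ (Gᵀ * G).mulVec d := e1.symm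
      _ ≤ d ⬝ᵥ T.mulVec d := e2
      _ ≤ L ^ 2 * (w ⬝ᵥ T.mulVec w) := e4
      _ = L ^ 2 * (z ⬝ᵥ (Wᵀ * T * W).mulVec z) := by rw [e5]
      _ ≤ L ^ 2 * (S * ‖eu z‖ ^ 2) := by
          exact mul_le_mul_of_nonneg_left e6 (by positivity)
  have hGdle : ‖eu (G.mulVec d)‖ ≤ L * Real.sqrt S * ‖eu z‖ := by
    have hrhs : 0 ≤ L * Real.sqrt S * ‖eu z‖ := by positivity
    have hsq' : ‖eu (G.mulVec d)‖ ^ 2 ≤ (L * Real.sqrt S * ‖eu z‖) ^ 2 := by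
      calc ‖eu (G.mulVec d)‖ ^ 2 ≤ L ^ 2 * (S * ‖eu z‖ ^ 2) := hsq
        _ = (L * Real.sqrt S * ‖eu z‖) ^ 2 := by
            rw [mul_pow, mul_pow, Real.sq_sqrt hS0]; ring
    calc ‖eu (G.mulVec d)‖ = Real.sqrt (‖eu (G.mulVec d)‖ ^ 2) :=
          (Real.sqrt_sq (norm_nonneg _)).symm
      _ ≤ Real.sqrt ((L * Real.sqrt S * ‖eu z‖) ^ 2) := Real.sqrt_le_sqrt hsq'
      _ = L * Real.sqrt S * ‖eu z‖ := Real.sqrt_sq hrhs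
  calc ‖eu (H.mulVec x + G.mulVec (fun i => φ (W.mulVec x i))) -
        eu (H.mulVec x' + G.mulVec (fun i => φ (W.mulVec x' i)))‖
      = ‖eu ((H + c • (G * W)).mulVec z) + eu (G.mulVec d)‖ := by rw [heq]
    _ ≤ ‖eu ((H + c • (G * W)).mulVec z)‖ + ‖eu (G.mulVec d)‖ := norm_add_le _ _
    _ ≤ specNorm (H + c • (G * W)) * ‖eu z‖ + L * Real.sqrt S * ‖eu z‖ :=
        add_le_add (eu_mulVec_le _ _) hGdle
    _ = (specNorm (H + c • (G * W)) + L * Real.sqrt S) * ‖x - x'‖ := by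
        rw [hznorm]; ring
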